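/- In the Ewens model, the difference ΔW(N,k) = W(N,k+1) − W(N,k) satisfies ΔW(N,k) = (N−1)·ΔW(N−1,k) + θ²·((N−2)!/k!)·[θ(θ+1)···(θ+k−1)], with initial condition ΔW(N,N−2) = θ(θ−(N−1))·θ(θ+1)···(θ+N−3). -/

import Mathlib

/-- Number of left-to-right maxima of the permutation `π` (one-line notation
`i ↦ π i`): positions `j` such that `π i < π j` for all `i < j`. -/
def lrmaxCount {N : ℕ} (π : Equiv.Perm (Fin N)) : ℕ :=
  (Finset.univ.filter (fun j : Fin N => ∀ i, i < j → π i < π j)).card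

/-- Number of inversions of `π`: pairs of positions `i < j` with `π i > π j`. -/
def invCount {N : ℕ} (π : Equiv.Perm (Fin N)) : ℕ :=
  (Finset.univ.filter (fun p : Fin N × Fin N => p.1 < p.2 ∧ π p.2 < π p.1)).card

/-- Position `j` is a left-to-right maximum of `π`. -/
def IsLRMax {N : ℕ} (π : Equiv.Perm (Fin N)) (j : Fin N) : Prop :=
  ∀ i, i < j → π i < π j

/-- `π` is `k`-winnable: the positional strategy that rejects the first `k`
candidates (positions `0,…,k-1`) and accepts the next left-to-right maximum
thereafter selects the position of the maximal value. -/
def KWinnable {N : ℕ} (k : ℕ) (π : Equiv.Perm (Fin N)) : Prop :=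
  ∃ j : Fin N, k ≤ (j : ℕ) ∧ IsLRMax π j ∧ (∀ i, π i ≤ π j) ∧
    ∀ i : Fin N, k ≤ (i : ℕ) → i < j → ¬ IsLRMax π i

open Classical in
/-- Ewens-weighted count of `k`-winnable permutations:
`W(N,k) = Σ_{k-winnable π ∈ S_N} θ^{lrmax(π)}`. -/
noncomputable def W (R : Type*) [CommRing R] (N k : ℕ) (θ : R) : R :=
  ∑ π ∈ Finset.univ.filter (fun π : Equiv.Perm (Fin N) => KWinnable k π),
    θ ^ lrmaxCount π





open Finset

noncomputable local instance (priority := low) : ∀ p, Decidable p := fun p => Classical.propDecidable p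

noncomputable def wgt {N : ℕ} (θ : ℝ) (π : Equiv.Perm (Fin N)) : ℝ :=
  ∏ i, (if IsLRMax π i then θ else 1)

lemma wgt_eq {N : ℕ} (θ : ℝ) (π : Equiv.Perm (Fin N)) : θ ^ lrmaxCount π = wgt θ π := by
  rw [wgt, ← Finset.prod_filter, Finset.prod_const, lrmaxCount]
  congr 1
  apply congrArg
  ext j
  simp [IsLRMax, Finset.mem_filter]
  exact ⟨fun h => (@Finset.mem_filter _ _ (fun _ => Classical.propDecidable _) _ _).mpr ⟨Finset.mem_univ _, h⟩, fun h => ((@Finset.mem_filter _ _ (fun _ => Classical.propDecidable _) _ _).mp h).2⟩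

-- Φ : inserting value v at the last position
def phiFun {n : ℕ} (σ : Equiv.Perm (Fin n)) (v : Fin (n+1)) : Fin (n+1) → Fin (n+1) :=
  Fin.lastCases v (fun j => v.succAbove (σ j))

@[simp] lemma phiFun_last {n : ℕ} (σ : Equiv.Perm (Fin n)) (v : Fin (n+1)) :
    phiFun σ v (Fin.last n) = v := by simp [phiFun]

@[simp] lemma phiFun_castSucc {n : ℕ} (σ : Equiv.Perm (Fin n)) (v : Fin (n+1)) (j : Fin n) :
    phiFun σ v j.castSucc = v.succAbove (σ j) := by simp [phiFun]

lemma phiFun_inj {n : ℕ} (σ : Equiv.Perm (Fin n)) (v : Fin (n+1)) :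
    Function.Injective (phiFun σ v) := by
  intro a b hab
  induction a using Fin.lastCases with
  | last =>
    induction b using Fin.lastCases with
    | last => rfl
    | cast j => simp only [phiFun_last, phiFun_castSucc] at hab
                exact absurd hab.symm (Fin.succAbove_ne v _)
  | cast i =>
    induction b using Fin.lastCases with
    | last => simp only [phiFun_last, phiFun_castSucc] at hab
              exact absurd hab (Fin.succAbove_ne v _)
    | cast j =>
      simp only [phiFun_castSucc] at hab
      rw [σ.injective (Fin.succAbove_right_injective hab)]

noncomputable def Phi {n : ℕ} (p : Equiv.Perm (Fin n) × Fin (n+1)) : Equiv.Perm (Fin (n+1)) :=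
  Equiv.ofBijective (phiFun p.1 p.2) (Finite.injective_iff_bijective.mp (phiFun_inj p.1 p.2))

@[simp] lemma Phi_last {n : ℕ} (p : Equiv.Perm (Fin n) × Fin (n+1)) :
    Phi p (Fin.last n) = p.2 := by simp [Phi, Equiv.ofBijective_apply]

@[simp] lemma Phi_castSucc {n : ℕ} (p : Equiv.Perm (Fin n) × Fin (n+1)) (j : Fin n) :
    Phi p j.castSucc = p.2.succAbove (p.1 j) := by simp [Phi, Equiv.ofBijective_apply]

lemma Phi_bij {n : ℕ} : Function.Bijective (Phi (n := n)) := by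
  rw [Fintype.bijective_iff_injective_and_card]
  constructor
  · intro p q hpq
    have hv : p.2 = q.2 := by
      have := congrArg (fun e : Equiv.Perm (Fin (n+1)) => e (Fin.last n)) hpq
      simpa using this
    have hσ : p.1 = q.1 := by
      ext j
      have := congrArg (fun e : Equiv.Perm (Fin (n+1)) => e (Fin.castSucc j)) hpq
      simp only [Phi_castSucc, hv] at this
      exact congrArg Fin.val (Fin.succAbove_right_injective this)
    exact Prod.ext hσ hv
  · simp [Fintype.card_perm, Nat.factorial_succ, mul_comm]

lemma isLRMax_Phi_castSucc {n : ℕ} (σ : Equiv.Perm (Fin n)) (v : Fin (n+1)) (j : Fin n) :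
    IsLRMax (Phi (σ, v)) j.castSucc ↔ IsLRMax σ j := by
  constructor
  · intro h i hij
    have := h i.castSucc (by simpa [Fin.castSucc_lt_castSucc_iff] using hij)
    simpa [Fin.succAbove_lt_succAbove_iff] using this
  · intro h i hij
    induction i using Fin.lastCases with
    | last => exact absurd (hij.trans (Fin.castSucc_lt_last j)) (lt_irrefl _)
    | cast i =>
      have hij' : i < j := by simpa [Fin.castSucc_lt_castSucc_iff] using hij
      simpa [Fin.succAbove_lt_succAbove_iff] using h i hij'

lemma isLRMax_Phi_last {n : ℕ} (σ : Equiv.Perm (Fin n)) (v : Fin (n+1)) :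
    IsLRMax (Phi (σ, v)) (Fin.last n) ↔ v = Fin.last n := by
  constructor
  · intro h
    by_contra hv
    obtain ⟨u, hu⟩ := Fin.exists_succAbove_eq (Ne.symm hv)
    have := h (Fin.castSucc (σ.symm u)) (Fin.castSucc_lt_last _)
    simp only [Phi_castSucc, Phi_last, Equiv.apply_symm_apply, hu] at this
    exact absurd (this.trans_le (Fin.le_last v)) (lt_irrefl _)
  · intro hv i hi
    induction i using Fin.lastCases with
    | last => exact absurd hi (lt_irrefl _)
    | cast i =>
      simp only [Phi_castSucc, Phi_last, hv]
      rw [Fin.succAbove_last]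
      exact Fin.castSucc_lt_last _

lemma wgt_Phi {n : ℕ} (θ : ℝ) (σ : Equiv.Perm (Fin n)) (v : Fin (n+1)) :
    wgt θ (Phi (σ, v)) = wgt θ σ * (if v = Fin.last n then θ else 1) := by
  rw [wgt, wgt, Fin.prod_univ_castSucc]
  congr 1
  · apply Finset.prod_congr rfl
    intro j _
    rw [if_congr (isLRMax_Phi_castSucc σ v j) rfl rfl]
  · rw [if_congr (isLRMax_Phi_last σ v) rfl rfl]

lemma sum_perm_succ {n : ℕ} (f : Equiv.Perm (Fin (n+1)) → ℝ) :
    ∑ π : Equiv.Perm (Fin (n+1)), f π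
      = ∑ σ : Equiv.Perm (Fin n), ∑ v : Fin (n+1), f (Phi (σ, v)) := by
  have h1 : ∑ p : Equiv.Perm (Fin n) × Fin (n+1), f (Phi p) = ∑ π : Equiv.Perm (Fin (n+1)), f π :=
    Fintype.sum_bijective Phi Phi_bij _ f (fun p => rfl)
  rw [← h1, Fintype.sum_prod_type]

lemma sumAll {θ : ℝ} : ∀ n : ℕ, ∑ π : Equiv.Perm (Fin n), wgt θ π = ∏ j ∈ Finset.range n, (θ + j) := by
  intro n
  induction n with
  | zero =>
    rw [Finset.range_zero, Finset.prod_empty]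
    rw [Fintype.sum_eq_single 1 (fun π hπ => absurd (Subsingleton.elim π 1) hπ)]
    simp [wgt]
  | succ n ih =>
    rw [sum_perm_succ (wgt θ)]
    have : ∀ σ : Equiv.Perm (Fin n), ∑ v : Fin (n+1), wgt θ (Phi (σ, v)) = wgt θ σ * (θ + n) := by
      intro σ
      simp only [wgt_Phi]
      rw [← Finset.mul_sum]
      congr 1
      rw [Fin.sum_univ_castSucc]
      simp [Fin.ne_of_lt (Fin.castSucc_lt_last _), add_comm]
    rw [Finset.sum_congr rfl (fun σ _ => this σ), ← Finset.sum_mul, ih, Finset.prod_range_succ]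

def PatCond {N : ℕ} (k : ℕ) (T : Finset ℕ) (π : Equiv.Perm (Fin N)) : Prop :=
  ∀ i : Fin N, k ≤ (i : ℕ) → (IsLRMax π i ↔ (i : ℕ) ∈ T)

lemma patCond_Phi {n : ℕ} (k : ℕ) (hk : k ≤ n) (T : Finset ℕ) (σ : Equiv.Perm (Fin n)) (v : Fin (n+1)) :
    PatCond k T (Phi (σ, v)) ↔ PatCond k (T.erase n) σ ∧ (v = Fin.last n ↔ n ∈ T) := by
  constructor
  · intro h
    refine ⟨fun j hj => ?_, ?_⟩
    · have := h j.castSucc (by simpa using hj)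
      rw [isLRMax_Phi_castSucc] at this
      simp only [Fin.coe_castSucc] at this
      rw [this]
      rw [Finset.mem_erase]
      exact ⟨fun ht => ⟨Nat.ne_of_lt j.isLt, ht⟩, fun ht => ht.2⟩
    · have := h (Fin.last n) (by simpa using hk)
      rw [isLRMax_Phi_last] at this
      simpa using this
  · rintro ⟨h1, h2⟩ i hi
    induction i using Fin.lastCases with
    | last =>
      rw [isLRMax_Phi_last]
      simpa using h2
    | cast j =>
      have := h1 j (by simpa using hi)
      rw [isLRMax_Phi_castSucc, this]
      simp only [Fin.coe_castSucc, Finset.mem_erase]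
      exact ⟨fun ht => ht.2, fun ht => ⟨Nat.ne_of_lt j.isLt, ht⟩⟩

lemma sumPattern (θ : ℝ) (k : ℕ) :
    ∀ N : ℕ, k ≤ N → ∀ T : Finset ℕ, T ⊆ Finset.Ico k N →
      ∑ π ∈ Finset.univ.filter (PatCond (N := N) k T), wgt θ π
        = (∏ j ∈ Finset.range k, (θ + j)) * θ ^ T.card * ∏ i ∈ (Finset.Ico k N) \ T, (i : ℝ) := by
  intro N hkN0
  induction N, hkN0 using Nat.le_induction with
  | base =>
    intro T hT
    have hT0 : T = ∅ := Finset.subset_empty.mp (by simpa using hT)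
    subst hT0
    have hfilter : Finset.univ.filter (PatCond (N := k) k ∅) = Finset.univ := by
      apply Finset.filter_true_of_mem
      intro π _ i hi
      exact absurd hi (Nat.not_le.mpr i.isLt)
    rw [hfilter]
    simp [sumAll k]
  | succ N hkN ih =>
    intro T hT
    have hT' : T.erase N ⊆ Finset.Ico k N := by
      intro x hx
      rw [Finset.mem_erase] at hx
      have := hT hx.2
      rw [Finset.mem_Ico] at this ⊢
      exact ⟨this.1, lt_of_le_of_ne (Nat.lt_succ_iff.mp this.2) hx.1⟩
    rw [Finset.sum_filter, sum_perm_succ]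
    have key : ∀ σ : Equiv.Perm (Fin N), ∀ v : Fin (N+1),
        (if PatCond k T (Phi (σ, v)) then wgt θ (Phi (σ, v)) else 0)
          = (if v = Fin.last N ↔ N ∈ T then (1:ℝ) else 0) *
            ((if PatCond k (T.erase N) σ then wgt θ σ else 0) * (if v = Fin.last N then θ else 1)) := by
      intro σ v
      rw [if_congr (patCond_Phi k hkN T σ v) rfl rfl, wgt_Phi]
      by_cases h1 : PatCond k (T.erase N) σ <;> by_cases h2 : (v = Fin.last N ↔ N ∈ T) <;>
        simp [h1, h2]
    simp only [key]
    by_cases hNT : N ∈ T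
    · have hsum : ∀ σ : Equiv.Perm (Fin N),
          ∑ v : Fin (N+1), (if v = Fin.last N ↔ N ∈ T then (1:ℝ) else 0) *
            ((if PatCond k (T.erase N) σ then wgt θ σ else 0) * (if v = Fin.last N then θ else 1))
          = (if PatCond k (T.erase N) σ then wgt θ σ else 0) * θ := by
        intro σ
        rw [Finset.sum_eq_single (Fin.last N)]
        · simp [hNT]
        · intro v _ hv
          simp [hNT, hv]
        · simp
      rw [Finset.sum_congr rfl (fun σ _ => hsum σ), ← Finset.sum_mul, ← Finset.sum_filter, ih _ hT']
      have hcard : T.card = (T.erase N).card + 1 := by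
        have hpos : 0 < T.card := Finset.card_pos.mpr ⟨N, hNT⟩
        rw [Finset.card_erase_of_mem hNT]
        exact (Nat.succ_pred_eq_of_pos hpos).symm
      have hsd : Finset.Ico k (N+1) \ T = Finset.Ico k N \ (T.erase N) := by
        ext x
        simp only [Finset.mem_sdiff, Finset.mem_Ico, Finset.mem_erase, Nat.lt_succ_iff]
        constructor
        · rintro ⟨⟨h1, h2⟩, h3⟩
          exact ⟨⟨h1, lt_of_le_of_ne h2 (fun hx => h3 (hx ▸ hNT))⟩, fun hc => h3 hc.2⟩
        · rintro ⟨⟨h1, h2⟩, h3⟩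
          exact ⟨⟨h1, le_of_lt h2⟩, fun hc => h3 ⟨Nat.ne_of_lt h2, hc⟩⟩
      rw [hcard, hsd]
      ring
    · have hT'' : T.erase N = T := Finset.erase_eq_of_notMem hNT
      have hsum : ∀ σ : Equiv.Perm (Fin N),
          ∑ v : Fin (N+1), (if v = Fin.last N ↔ N ∈ T then (1:ℝ) else 0) *
            ((if PatCond k (T.erase N) σ then wgt θ σ else 0) * (if v = Fin.last N then θ else 1))
          = (if PatCond k (T.erase N) σ then wgt θ σ else 0) * N := by
        intro σ
        rw [Fin.sum_univ_castSucc]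
        have : ∀ j : Fin N, (Fin.castSucc j = Fin.last N ↔ N ∈ T) := by
          intro j
          simp [Fin.ne_of_lt (Fin.castSucc_lt_last j), hNT]
        simp only [this]
        simp [Fin.ne_of_lt (Fin.castSucc_lt_last _), hNT, Finset.sum_const, mul_comm]
      rw [Finset.sum_congr rfl (fun σ _ => hsum σ), ← Finset.sum_mul, ← Finset.sum_filter, hT'', ih _ (hT'' ▸ hT')]
      have hsd : Finset.Ico k (N+1) \ T = insert N (Finset.Ico k N \ T) := by
        ext x
        simp only [Finset.mem_sdiff, Finset.mem_Ico, Finset.mem_insert, Nat.lt_succ_iff]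
        constructor
        · rintro ⟨⟨h1, h2⟩, h3⟩
          rcases eq_or_lt_of_le h2 with h | h
          · exact Or.inl h
          · exact Or.inr ⟨⟨h1, h⟩, h3⟩
        · rintro (rfl | ⟨⟨h1, h2⟩, h3⟩)
          · exact ⟨⟨hkN, le_refl _⟩, hNT⟩
          · exact ⟨⟨h1, le_of_lt h2⟩, h3⟩
      have hNnot : N ∉ Finset.Ico k N \ T := by simp
      rw [hsd, Finset.prod_insert hNnot]
      ring


lemma exists_max {n : ℕ} (π : Equiv.Perm (Fin (n+1))) :
    ∃ t : Fin (n+1), IsLRMax π t ∧ ∀ i, π i ≤ π t := by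
  refine ⟨π.symm (Fin.last n), fun i hi => ?_, fun i => ?_⟩
  · rw [Equiv.apply_symm_apply]
    refine lt_of_le_of_ne (Fin.le_last _) (fun hc => ?_)
    have : i = π.symm (Fin.last n) := by rw [← hc]; simp
    exact absurd (this ▸ hi) (lt_irrefl _)
  · rw [Equiv.apply_symm_apply]; exact Fin.le_last _

lemma kwin_iff {N : ℕ} (k : ℕ) (π : Equiv.Perm (Fin N)) :
    KWinnable k π ↔ ∃ j ∈ Finset.Ico k N, PatCond k {j} π := by
  constructor
  · rintro ⟨j, hkj, hLR, hmax, hno⟩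
    refine ⟨(j : ℕ), Finset.mem_Ico.mpr ⟨hkj, j.isLt⟩, fun i hi => ?_⟩
    rw [Finset.mem_singleton]
    constructor
    · intro hLRi
      by_contra hne
      rcases lt_trichotomy i j with h | h | h
      · exact hno i hi h hLRi
      · exact hne (congrArg Fin.val h)
      · exact absurd (hLRi j h) (not_lt.mpr (hmax i))
    · intro hv
      have : i = j := Fin.ext hv
      exact this ▸ hLR
  · rintro ⟨j, hj, hpat⟩
    rw [Finset.mem_Ico] at hj
    match N, π with
    | (n+1), π =>
      set jF : Fin (n+1) := ⟨j, hj.2⟩ with hjF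
      have hkj : k ≤ (jF : ℕ) := hj.1
      have hLRj : IsLRMax π jF := (hpat jF hkj).mpr (Finset.mem_singleton_self _)
      obtain ⟨t, hLRt, hmaxt⟩ := exists_max π
      have htj : t = jF := by
        by_cases ht : k ≤ (t : ℕ)
        · exact Fin.ext (Finset.mem_singleton.mp ((hpat t ht).mp hLRt))
        · exfalso
          have htlt : t < jF := by
            rw [Fin.lt_def]; omega
          exact absurd (hLRj t htlt) (not_lt.mpr (hmaxt jF))
      refine ⟨jF, hkj, hLRj, htj ▸ hmaxt, fun i hik hij hLRi => ?_⟩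
      have hij2 : (i : ℕ) = j := Finset.mem_singleton.mp ((hpat i hik).mp hLRi)
      have hieq : i = jF := Fin.ext hij2
      rw [hieq] at hij
      exact absurd hij (lt_irrefl jF)


lemma Wformula (N k : ℕ) (hk : k ≤ N) (θ : ℝ) :
    W ℝ N k θ = (∏ j ∈ Finset.range k, (θ + j)) * θ *
      ∑ j ∈ Finset.Ico k N, ∏ i ∈ (Finset.Ico k N).erase j, (i : ℝ) := by
  rw [W]
  rw [Finset.sum_congr rfl (fun π _ => wgt_eq θ π)]
  have hfil : Finset.univ.filter (fun π : Equiv.Perm (Fin N) => KWinnable k π)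
      = (Finset.Ico k N).biUnion (fun j => Finset.univ.filter (PatCond (N := N) k {j})) := by
    ext π
    simp only [Finset.mem_filter, Finset.mem_biUnion, Finset.mem_univ, true_and]
    rw [kwin_iff]
  have hdisj : ∀ j1 ∈ (Finset.Ico k N : Finset ℕ), ∀ j2 ∈ (Finset.Ico k N : Finset ℕ), j1 ≠ j2 →
      Disjoint (Finset.univ.filter (PatCond (N := N) k {j1}))
        (Finset.univ.filter (PatCond (N := N) k {j2})) := by
    intro j1 hj1 j2 hj2 hne
    apply Finset.disjoint_left.mpr
    intro π hπ1 hπ2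
    rw [Finset.mem_filter] at hπ1 hπ2
    have hj1' := Finset.mem_Ico.mp hj1
    set jF : Fin N := ⟨j1, hj1'.2⟩
    have h1 : IsLRMax π jF := (hπ1.2 jF hj1'.1).mpr (Finset.mem_singleton_self _)
    have h2 : (jF : ℕ) ∈ ({j2} : Finset ℕ) := (hπ2.2 jF hj1'.1).mp h1
    exact hne (Finset.mem_singleton.mp h2)
  rw [hfil, Finset.sum_biUnion hdisj]
  rw [Finset.mul_sum]
  apply Finset.sum_congr rfl
  intro j hj
  have hjN : j ∈ Finset.Ico k N := hj
  have hsub : ({j} : Finset ℕ) ⊆ Finset.Ico k N := Finset.singleton_subset_iff.mpr hjN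
  rw [sumPattern θ k N hk {j} hsub]
  rw [Finset.card_singleton, pow_one, Finset.sdiff_singleton_eq_erase]

lemma Ico_top_split (a m : ℕ) (ha : a ≤ m) :
    Finset.Ico a (m+1) = insert m (Finset.Ico a m) := by
  ext x; simp only [Finset.mem_Ico, Finset.mem_insert]; omega

lemma psplit_top (a m : ℕ) (ha : a ≤ m) :
    ∏ i ∈ Finset.Ico a (m+1), (i : ℝ) = (∏ i ∈ Finset.Ico a m, (i : ℝ)) * m := by
  rw [Ico_top_split a m ha, Finset.prod_insert (by simp)]
  ring

lemma Ssplit_top (a m : ℕ) (ha : a ≤ m) :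
    ∑ j ∈ Finset.Ico a (m+1), ∏ i ∈ (Finset.Ico a (m+1)).erase j, (i : ℝ)
      = ∏ i ∈ Finset.Ico a m, (i : ℝ)
        + m * ∑ j ∈ Finset.Ico a m, ∏ i ∈ (Finset.Ico a m).erase j, (i : ℝ) := by
  have hnot : m ∉ Finset.Ico a m := by simp
  rw [Ico_top_split a m ha, Finset.sum_insert hnot, Finset.erase_insert hnot]
  congr 1
  rw [Finset.mul_sum]
  apply Finset.sum_congr rfl
  intro j hj
  have hjm : j ≠ m := by rw [Finset.mem_Ico] at hj; omega
  rw [Finset.erase_insert_of_ne hjm.symm, Finset.prod_insert (by simp)]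

lemma Ssplit_bot (k M : ℕ) (h : k < M) :
    ∑ j ∈ Finset.Ico k M, ∏ i ∈ (Finset.Ico k M).erase j, (i : ℝ)
      = ∏ i ∈ Finset.Ico (k+1) M, (i : ℝ)
        + k * ∑ j ∈ Finset.Ico (k+1) M, ∏ i ∈ (Finset.Ico (k+1) M).erase j, (i : ℝ) := by
  have hins : Finset.Ico k M = insert k (Finset.Ico (k+1) M) := by
    ext x; simp only [Finset.mem_Ico, Finset.mem_insert]; omega
  have hnot : k ∉ Finset.Ico (k+1) M := by simp
  rw [hins, Finset.sum_insert hnot, Finset.erase_insert hnot]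
  congr 1
  rw [Finset.mul_sum]
  apply Finset.sum_congr rfl
  intro j hj
  have hjk : j ≠ k := by rw [Finset.mem_Ico] at hj; omega
  rw [Finset.erase_insert_of_ne hjk.symm, Finset.prod_insert (by simp)]

lemma S_self (a : ℕ) : ∑ j ∈ Finset.Ico a a, ∏ i ∈ (Finset.Ico a a).erase j, (i : ℝ) = 0 := by
  simp

lemma natfac (k : ℕ) : ∀ l : ℕ, k ≤ l →
    k.factorial * ∏ i ∈ Finset.Ico (k+1) (l+1), i = l.factorial := by
  intro l hkl
  induction l, hkl using Nat.le_induction with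
  | base => simp
  | succ l hkl ih =>
    rw [Ico_top_split (k+1) (l+1) (by omega), Finset.prod_insert (by simp)]
    rw [Nat.factorial_succ, ← ih]
    ring

lemma prodIco_real (k l : ℕ) (h : k ≤ l) :
    ∏ i ∈ Finset.Ico (k+1) (l+1), (i : ℝ) = (l.factorial : ℝ) / (k.factorial : ℝ) := by
  have h1 := natfac k l h
  have h2 := congrArg (fun x : ℕ => (x : ℝ)) h1
  push_cast at h2
  rw [eq_div_iff (by exact_mod_cast k.factorial_ne_zero)]
  linarith [h2]


/-- recurrence for `ΔW(N,k) = W(N,k+1) − W(N,k)` in the Ewens model: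
`ΔW(N,k) = (N−1)·ΔW(N−1,k) + θ²·((N−2)!/k!)·θ(θ+1)⋯(θ+k−1)`,
with initial condition `ΔW(N,N−2) = θ(θ−(N−1))·θ(θ+1)⋯(θ+N−3)`. -/
theorem ewens_deltaW_recurrence :
    (∀ N k : ℕ, ∀ θ : ℝ, k + 2 < N →
      W ℝ N (k + 1) θ - W ℝ N k θ =
        ((N : ℝ) - 1) * (W ℝ (N - 1) (k + 1) θ - W ℝ (N - 1) k θ) +
          θ ^ 2 * ((Nat.factorial (N - 2) : ℝ) / (Nat.factorial k : ℝ)) *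
            ∏ j ∈ Finset.range k, (θ + j)) ∧
    (∀ N : ℕ, ∀ θ : ℝ, 2 ≤ N →
      W ℝ N (N - 1) θ - W ℝ N (N - 2) θ =
        θ * (θ - ((N : ℝ) - 1)) * ∏ j ∈ Finset.range (N - 2), (θ + j)) := by
  constructor
  · intro N k θ h
    obtain ⟨l, rfl, hkl⟩ : ∃ l, N = l + 2 ∧ k + 1 ≤ l := ⟨N - 2, by omega, by omega⟩
    have e1 : l + 2 - 1 = l + 1 := rfl
    have e2 : l + 2 - 2 = l := rfl
    rw [e1, e2]
    rw [Wformula (l+2) (k+1) (by omega) θ, Wformula (l+2) k (by omega) θ,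
        Wformula (l+1) (k+1) (by omega) θ, Wformula (l+1) k (by omega) θ]
    rw [show l + 2 = (l+1) + 1 from rfl]
    rw [Ssplit_bot k ((l+1)+1) (by omega), Ssplit_bot k (l+1) (by omega)]
    rw [Ssplit_top (k+1) (l+1) (by omega)]
    rw [psplit_top (k+1) (l+1) (by omega)]
    rw [prodIco_real k l (by omega)]
    rw [Finset.prod_range_succ]
    push_cast
    ring
  · intro N θ h
    obtain ⟨l, rfl⟩ : ∃ l, N = l + 2 := ⟨N - 2, by omega⟩
    have e1 : l + 2 - 1 = l + 1 := rfl
    have e2 : l + 2 - 2 = l := rfl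
    rw [e1, e2]
    rw [Wformula (l+2) (l+1) (by omega) θ, Wformula (l+2) l (by omega) θ]
    rw [show l + 2 = (l+1) + 1 from rfl]
    rw [Ssplit_top (l+1) (l+1) (le_refl _), Ssplit_top l (l+1) (by omega),
        Ssplit_top l l (le_refl _), S_self, S_self]
    have h1 : ∏ i ∈ Finset.Ico (l+1) (l+1), (i : ℝ) = 1 := by simp
    have h2 : ∏ i ∈ Finset.Ico l l, (i : ℝ) = 1 := by simp
    have h3 : ∏ i ∈ Finset.Ico l (l+1), (i : ℝ) = l := by
      rw [psplit_top l l (le_refl _), h2]; ring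
    rw [h1, h2, h3, Finset.prod_range_succ]
    push_cast
    ring
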